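/- Let H̃ ∈ ℂ^{(K−1)×M} be such that H̃†PH̃ is positive definite, and let ψ̃ ∈ ℝ^M be such that P(H̃x̄ + c) = 0 where x̄_m = e^{iψ̃_m}. Then there exist an open neighborhood 𝓗 ⊆ ℂ^{(K−1)×M} of H̃ and continuously differentiable (over ℝ) functions d_ψ : ℂ^{(K−1)×M} → ℝ^M and d_y : ℂ^{(K−1)×M} → ℝ^M with d_ψ(H̃) = ψ̃ and d_y(H̃) = 0, such that for every H ∈ 𝓗, letting ψ = d_ψ(H), y = d_y(H), and W = Diag(e^{iψ₁},…,e^{iψ_M}), the complex vector equation (W†H†PHW + Diag(y))·𝟙 + W†H†Pc = 0 holds (𝟙 ∈ ℝ^M the all-one vector). Moreover there is a neighborhood U of (ψ̃, 0) in ℝ^M × ℝ^M such that for every H ∈ 𝓗, (d_ψ(H), d_y(H)) is the unique pair (ψ, y) ∈ U satisfying this equation. -/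

import Mathlib

open Matrix
open scoped ComplexOrder

attribute [local instance] Matrix.normedAddCommGroup Matrix.normedSpace

/-- `P = I_{K−1} − ‖t‖⁻² t tᵀ`, regarded as a complex `(K−1)×(K−1)` matrix. -/
noncomputable def Pmat {K : ℕ} (t : Fin (K - 1) → ℝ) :
    Matrix (Fin (K - 1)) (Fin (K - 1)) ℂ :=
  1 - Matrix.of fun i j => (((∑ k, t k ^ 2)⁻¹ * (t i * t j) : ℝ) : ℂ)

/-- The stationarity equation `(W†H†PHW + Diag(y))𝟙 + W†H†Pc = 0`, where
`W = Diag(e^{iψ₁},…,e^{iψ_M})`. -/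
def regEq {K M : ℕ} (t : Fin (K - 1) → ℝ) (c : Fin (K - 1) → ℂ)
    (H : Matrix (Fin (K - 1)) (Fin M) ℂ) (ψ y : Fin M → ℝ) : Prop :=
  let W : Matrix (Fin M) (Fin M) ℂ :=
    Matrix.diagonal fun m => Complex.exp (Complex.I * ((ψ m : ℝ) : ℂ))
  (Wᴴ * Hᴴ * Pmat t * H * W + Matrix.diagonal fun m => ((y m : ℝ) : ℂ)) *ᵥ (fun _ => 1)
    + Wᴴ *ᵥ (Hᴴ *ᵥ (Pmat t *ᵥ c)) = 0

noncomputable section AuxIFT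

def xfun {M : ℕ} (ψ : Fin M → ℝ) : Fin M → ℂ := fun m => Complex.exp (Complex.I * (ψ m : ℂ))

def gfun {M K : ℕ} (t : Fin (K - 1) → ℝ) (c : Fin (K - 1) → ℂ)
    (H : Matrix (Fin (K - 1)) (Fin M) ℂ) (ψ : Fin M → ℝ) : Fin M → ℂ :=
  fun m => (starRingEnd ℂ) (xfun ψ m) * (Hᴴ *ᵥ (Pmat t *ᵥ (H *ᵥ xfun ψ + c))) m

def PhiMap {M K : ℕ} (t : Fin (K - 1) → ℝ) (c : Fin (K - 1) → ℂ) :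
    Matrix (Fin (K - 1)) (Fin M) ℂ × ((Fin M → ℝ) × (Fin M → ℝ)) →
      Matrix (Fin (K - 1)) (Fin M) ℂ × ((Fin M → ℝ) × (Fin M → ℝ)) :=
  fun p => (p.1, (fun m => (gfun t c p.1 p.2.1 m).im,
                  fun m => (gfun t c p.1 p.2.1 m).re + p.2.2 m))

theorem regEq_iff {M K : ℕ} (t : Fin (K - 1) → ℝ) (c : Fin (K - 1) → ℂ)
    (H : Matrix (Fin (K - 1)) (Fin M) ℂ) (ψ y : Fin M → ℝ) :
    regEq t c H ψ y ↔ (PhiMap t c (H, (ψ, y))).2 = 0 := by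
  have key : ((Matrix.diagonal fun m => Complex.exp (Complex.I * ((ψ m : ℝ) : ℂ)))ᴴ * Hᴴ *
        Pmat t * H * (Matrix.diagonal fun m => Complex.exp (Complex.I * ((ψ m : ℝ) : ℂ)))
        + Matrix.diagonal fun m => ((y m : ℝ) : ℂ)) *ᵥ (fun _ => 1)
      + (Matrix.diagonal fun m => Complex.exp (Complex.I * ((ψ m : ℝ) : ℂ)))ᴴ *ᵥ
          (Hᴴ *ᵥ (Pmat t *ᵥ c)) = fun m => gfun t c H ψ m + (y m : ℂ) := by
    have hd : (Matrix.diagonal fun m => Complex.exp (Complex.I * ((ψ m : ℝ) : ℂ))) *ᵥ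
        (fun _ => 1) = xfun ψ := by
      funext k
      simp [Matrix.mulVec_diagonal, xfun]
    funext m
    simp [hd, gfun, xfun, Matrix.add_mulVec, ← Matrix.mulVec_mulVec, Matrix.diagonal_conjTranspose,
      Matrix.diagonal_mulVec_single, Matrix.mulVec_add, mul_add, Matrix.mulVec_diagonal]
    ring
  constructor
  · intro h
    rw [regEq] at h
    simp only [key] at h
    simp only [PhiMap]
    have h' : ∀ m, gfun t c H ψ m + (y m : ℂ) = 0 := fun m => congrFun h m
    refine Prod.ext ?_ ?_ <;> funext m <;>
      · have := h' m
        rw [Complex.ext_iff] at this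
        simp at this
        simp [this.1, this.2]
  · intro h
    rw [regEq]
    simp only [key]
    simp only [PhiMap] at h
    have h1 := congrFun (congrArg Prod.fst h) 
    have h2 := congrFun (congrArg Prod.snd h)
    funext m
    have e1 : (gfun t c H ψ m).im = 0 := by simpa using h1 m
    have e2 : (gfun t c H ψ m).re + y m = 0 := by simpa using h2 m
    rw [Complex.ext_iff]
    constructor <;> simp [e1, e2]


@[fun_prop] theorem contDiff_cexp : ContDiff ℝ 1 Complex.exp :=
  Complex.contDiff_exp.of_le le_top
attribute [fun_prop] ContDiff.sum
@[fun_prop] theorem contDiff_cofReal : ContDiff ℝ 1 Complex.ofReal :=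
  Complex.ofRealCLM.contDiff
@[fun_prop] theorem contDiff_creal : ContDiff ℝ 1 (fun z : ℂ => z.re) := Complex.reCLM.contDiff
@[fun_prop] theorem contDiff_cimag : ContDiff ℝ 1 (fun z : ℂ => z.im) := Complex.imCLM.contDiff
@[fun_prop] theorem contDiff_cstar : ContDiff ℝ 1 (fun z : ℂ => star z) :=
  Complex.conjCLE.toContinuousLinearMap.contDiff

theorem contDiff_PhiMap {M K : ℕ} (t : Fin (K - 1) → ℝ) (c : Fin (K - 1) → ℂ) :
    ContDiff ℝ 1 (PhiMap (M := M) t c) := by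
  unfold PhiMap gfun xfun
  simp only [Matrix.mulVec, dotProduct, Matrix.conjTranspose_apply, Pi.add_apply]
  fun_prop

theorem hasDerivAt_gfun {M K : ℕ} (t : Fin (K - 1) → ℝ) (c : Fin (K - 1) → ℂ)
    (Ht Hd : Matrix (Fin (K - 1)) (Fin M) ℂ) (ψt ψd : Fin M → ℝ)
    (hnl : Pmat t *ᵥ (Ht *ᵥ xfun ψt + c) = 0) (m : Fin M) :
    HasDerivAt (fun s : ℝ => gfun t c (Ht + s • Hd) (ψt + s • ψd) m)
      ((starRingEnd ℂ) (xfun ψt m) *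
        ((Htᴴ *ᵥ (Pmat t *ᵥ (Hd *ᵥ xfun ψt +
          Ht *ᵥ fun k => Complex.I * (ψd k : ℂ) * xfun ψt k))) m)) 0 := by
  have hq0 : ∀ j, ∑ i, Pmat t j i * ((∑ k, Ht i k * xfun ψt k) + c i) = 0 := by
    intro j
    have := congrFun hnl j
    simpa [Matrix.mulVec, dotProduct] using this
  -- elementary derivative facts
  have hofReal : ∀ (z : ℂ), HasDerivAt (fun s : ℝ => (s : ℂ) * z) z 0 := by
    intro z
    simpa using (Complex.ofRealCLM.hasFDerivAt.hasDerivAt).mul_const z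
  have he : ∀ k, HasDerivAt (fun s : ℝ => Complex.exp (Complex.I * ((ψt k + s * ψd k : ℝ) : ℂ)))
      (Complex.I * (ψd k : ℂ) * xfun ψt k) 0 := by
    intro k
    have h1 : HasDerivAt (fun s : ℝ => Complex.I * ((ψt k + s * ψd k : ℝ) : ℂ))
        (Complex.I * (ψd k : ℂ)) 0 := by
      have heq : (fun s : ℝ => Complex.I * ((ψt k + s * ψd k : ℝ) : ℂ))
          = fun s : ℝ => Complex.I * (ψt k : ℂ) + (s : ℂ) * (Complex.I * (ψd k : ℂ)) := by
        funext s; push_cast; ring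
      rw [heq]
      exact (hofReal _).const_add _
    have := h1.cexp
    simp only [mul_zero, add_zero, Complex.ofReal_add, Complex.ofReal_mul,
      Complex.ofReal_zero, zero_mul] at this ⊢
    convert this using 1
    simp [xfun]
    ring
  have hA : ∀ i k, HasDerivAt (fun s : ℝ => Ht i k + (s : ℂ) * Hd i k) (Hd i k) 0 :=
    fun i k => (hofReal _).const_add _
  -- the inner vector w j s
  have hw : ∀ j, HasDerivAt (fun s : ℝ => ∑ i, Pmat t j i *
        ((∑ k, (Ht i k + (s : ℂ) * Hd i k) *
          Complex.exp (Complex.I * ((ψt k + s * ψd k : ℝ) : ℂ))) + c i))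
      (∑ i, Pmat t j i * (∑ k, (Hd i k * xfun ψt k +
          Ht i k * (Complex.I * (ψd k : ℂ) * xfun ψt k)))) 0 := by
    intro j
    refine HasDerivAt.fun_sum fun i _ => ?_
    refine HasDerivAt.const_mul _ ?_
    refine HasDerivAt.add_const _ ?_
    refine HasDerivAt.fun_sum fun k _ => ?_
    have := (hA i k).fun_mul (he k)
    convert this using 1
    · rfl
    simp [xfun]
  -- q m s
  have hq : HasDerivAt (fun s : ℝ => ∑ j, star (Ht j m + (s : ℂ) * Hd j m) *
        (∑ i, Pmat t j i * ((∑ k, (Ht i k + (s : ℂ) * Hd i k) *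
          Complex.exp (Complex.I * ((ψt k + s * ψd k : ℝ) : ℂ))) + c i)))
      (∑ j, star (Ht j m) * (∑ i, Pmat t j i * (∑ k, (Hd i k * xfun ψt k +
          Ht i k * (Complex.I * (ψd k : ℂ) * xfun ψt k))))) 0 := by
    refine HasDerivAt.fun_sum fun j _ => ?_
    have hstar : HasDerivAt (fun s : ℝ => star (Ht j m + (s : ℂ) * Hd j m)) (star (Hd j m)) 0 := by
      have heq : (fun s : ℝ => star (Ht j m + (s : ℂ) * Hd j m))
          = fun s : ℝ => star (Ht j m) + (s : ℂ) * star (Hd j m) := by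
        funext s
        simp [star_add, star_mul', Complex.star_def, Complex.conj_ofReal]
      rw [heq]
      exact (hofReal _).const_add _
    have := hstar.fun_mul (hw j)
    convert this using 1
    · rfl
    have h0 : (∑ i, Pmat t j i * ((∑ k, Ht i k *
        Complex.exp (Complex.I * ((ψt k : ℝ) : ℂ))) + c i)) = 0 := by
      simpa [xfun] using hq0 j
    simp only [zero_mul, add_zero, Complex.ofReal_zero]
    rw [h0]
    simp
  -- outer product with conj (e m s)
  have hconj : HasDerivAt (fun s : ℝ =>
      (starRingEnd ℂ) (Complex.exp (Complex.I * ((ψt m + s * ψd m : ℝ) : ℂ))))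
      ((starRingEnd ℂ) (Complex.I * (ψd m : ℂ) * xfun ψt m)) 0 := by
    exact (he m).star
  have hfull := hconj.fun_mul hq
  -- identify the function with s ↦ gfun ... m
  have hfun : (fun s : ℝ => gfun t c (Ht + s • Hd) (ψt + s • ψd) m)
      = fun s : ℝ => (starRingEnd ℂ) (Complex.exp (Complex.I * ((ψt m + s * ψd m : ℝ) : ℂ))) *
        (∑ j, star (Ht j m + (s : ℂ) * Hd j m) *
          (∑ i, Pmat t j i * ((∑ k, (Ht i k + (s : ℂ) * Hd i k) *
            Complex.exp (Complex.I * ((ψt k + s * ψd k : ℝ) : ℂ))) + c i))) := by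
    funext s
    simp [gfun, xfun, Matrix.mulVec, dotProduct, Matrix.conjTranspose_apply,
      Matrix.add_apply, Matrix.smul_apply, Complex.real_smul]
  rw [hfun]
  have h0' : ∀ j, (∑ i, Pmat t j i * ((∑ k, Ht i k *
      Complex.exp (Complex.I * ((ψt k : ℝ) : ℂ))) + c i)) = 0 := by
    intro j
    simpa [xfun] using hq0 j
  convert hfull using 1
  · rfl
  simp only [zero_mul, add_zero, Complex.ofReal_zero]
  simp only [h0', mul_zero, Finset.sum_const_zero, zero_add]
  congr 1
  simp only [Matrix.mulVec, dotProduct, Matrix.conjTranspose_apply, Pi.add_apply,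
    xfun, Complex.star_def]
  refine Finset.sum_congr rfl fun j _ => ?_
  congr 1
  refine Finset.sum_congr rfl fun i _ => ?_
  congr 1
  rw [← Finset.sum_add_distrib]

theorem psid_eq_zero {M K : ℕ} (t : Fin (K - 1) → ℝ)
    (Ht : Matrix (Fin (K - 1)) (Fin M) ℂ) (hpd : (Htᴴ * Pmat t * Ht).PosDef)
    (ψt ψd : Fin M → ℝ)
    (h : ∀ m, ((starRingEnd ℂ) (xfun ψt m) *
      ((Htᴴ *ᵥ (Pmat t *ᵥ (Ht *ᵥ fun k => Complex.I * (ψd k : ℂ) * xfun ψt k))) m)).im = 0) :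
    ψd = 0 := by
  by_contra hne
  set xd : Fin M → ℂ := fun k => Complex.I * (ψd k : ℂ) * xfun ψt k with hxd
  have hxdne : xd ≠ 0 := by
    obtain ⟨k, hk⟩ : ∃ k, ψd k ≠ 0 := by
      by_contra h'
      push_neg at h'
      exact hne (funext h')
    intro h0
    have := congrFun h0 k
    simp [hxd, xfun, Complex.exp_ne_zero, Complex.I_ne_zero] at this
    exact hk this
  have hlt := hpd.dotProduct_mulVec_pos hxdne
  have hA : (Htᴴ *ᵥ (Pmat t *ᵥ (Ht *ᵥ xd))) = (Htᴴ * Pmat t * Ht) *ᵥ xd := by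
    simp [Matrix.mulVec_mulVec, Matrix.mul_assoc]
  have hterm : ∀ m, (star (xd m) * ((Htᴴ * Pmat t * Ht) *ᵥ xd) m).re
      = ψd m * ((starRingEnd ℂ) (xfun ψt m) * ((Htᴴ * Pmat t * Ht) *ᵥ xd) m).im := by
    intro m
    simp [hxd, Complex.star_def, _root_.map_mul, Complex.conj_ofReal, Complex.conj_I,
      Complex.mul_re, Complex.mul_im]
    ring
  have hre : (dotProduct (star xd) ((Htᴴ * Pmat t * Ht) *ᵥ xd)).re = 0 := by
    rw [dotProduct]
    rw [Complex.re_sum]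
    simp only [Pi.star_apply]
    rw [Finset.sum_congr rfl fun m _ => hterm m]
    refine Finset.sum_eq_zero fun m _ => ?_
    have := h m
    rw [hA] at this
    simp [this]
  rw [Complex.lt_def] at hlt
  simp only [Complex.zero_re] at hlt
  linarith [hlt.1, hre.ge]

end AuxIFT

/-- Claim 1 (implicit function theorem for the stationarity system): if `H̃†PH̃` is positive
definite and `ψ̃` solves the noiseless equation `P(H̃x̄ + c) = 0` with `x̄_m = e^{iψ̃_m}`, then
there are an open neighborhood `𝓗` of `H̃` and continuously differentiable functions
`d_ψ, d_y` with `d_ψ(H̃) = ψ̃`, `d_y(H̃) = 0` solving the stationarity equation for every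
`H ∈ 𝓗`, uniquely so in a fixed neighborhood `U` of `(ψ̃, 0)`. -/
theorem implicit_function_for_stationarity_equation
    (M K : ℕ) (hM : 1 ≤ M) (hK : 2 ≤ K)
    (c : Fin (K - 1) → ℂ) (t : Fin (K - 1) → ℝ) (ht : t ≠ 0)
    (Htilde : Matrix (Fin (K - 1)) (Fin M) ℂ)
    (hpd : (Htildeᴴ * Pmat t * Htilde).PosDef)
    (ψt : Fin M → ℝ)
    (hnl : Pmat t *ᵥ (Htilde *ᵥ (fun m => Complex.exp (Complex.I * ((ψt m : ℝ) : ℂ))) + c)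
      = 0) :
    ∃ 𝓗 : Set (Matrix (Fin (K - 1)) (Fin M) ℂ), IsOpen 𝓗 ∧ Htilde ∈ 𝓗 ∧
    ∃ dψ dy : Matrix (Fin (K - 1)) (Fin M) ℂ → (Fin M → ℝ),
      ContDiffOn ℝ 1 dψ 𝓗 ∧ ContDiffOn ℝ 1 dy 𝓗 ∧
      dψ Htilde = ψt ∧ dy Htilde = 0 ∧
      (∀ H ∈ 𝓗, regEq t c H (dψ H) (dy H)) ∧
      ∃ U : Set ((Fin M → ℝ) × (Fin M → ℝ)), U ∈ nhds (ψt, (0 : Fin M → ℝ)) ∧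
        ∀ H ∈ 𝓗, ∀ ψ y : Fin M → ℝ, (ψ, y) ∈ U → regEq t c H ψ y →
          ψ = dψ H ∧ y = dy H := by
  classical
  have hnl' : Pmat t *ᵥ (Htilde *ᵥ xfun ψt + c) = 0 := hnl
  set Φ : Matrix (Fin (K - 1)) (Fin M) ℂ × ((Fin M → ℝ) × (Fin M → ℝ)) →
      Matrix (Fin (K - 1)) (Fin M) ℂ × ((Fin M → ℝ) × (Fin M → ℝ)) := PhiMap t c with hΦdef
  set a : Matrix (Fin (K - 1)) (Fin M) ℂ × ((Fin M → ℝ) × (Fin M → ℝ)) :=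
    (Htilde, (ψt, 0)) with hadef
  have hC : ContDiff ℝ 1 Φ := contDiff_PhiMap t c
  have hg0 : ∀ m, gfun t c Htilde ψt m = 0 := by
    intro m
    simp [gfun, hnl', Matrix.mulVec_zero]
  have hΦa : Φ a = (Htilde, ((0 : Fin M → ℝ), (0 : Fin M → ℝ))) := by
    simp only [hΦdef, hadef, PhiMap]
    refine Prod.ext rfl (Prod.ext ?_ ?_) <;> funext m <;> simp [hg0 m]
  have hdiff : DifferentiableAt ℝ Φ a := (hC.differentiable one_ne_zero) a
  have hD : HasFDerivAt Φ (fderiv ℝ Φ a) a := hdiff.hasFDerivAt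
  set D := fderiv ℝ Φ a with hDdef
  -- the directional derivative formula
  have hDv : ∀ v : Matrix (Fin (K - 1)) (Fin M) ℂ × ((Fin M → ℝ) × (Fin M → ℝ)),
      D v = (v.1,
        ((fun m => ((starRingEnd ℂ) (xfun ψt m) * ((Htildeᴴ *ᵥ (Pmat t *ᵥ (v.1 *ᵥ xfun ψt +
            Htilde *ᵥ fun k => Complex.I * (v.2.1 k : ℂ) * xfun ψt k))) m)).im),
         (fun m => ((starRingEnd ℂ) (xfun ψt m) * ((Htildeᴴ *ᵥ (Pmat t *ᵥ (v.1 *ᵥ xfun ψt +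
            Htilde *ᵥ fun k => Complex.I * (v.2.1 k : ℂ) * xfun ψt k))) m)).re + v.2.2 m))) := by
    intro v
    have hline : HasDerivAt (fun s : ℝ => a + s • v) v 0 := by
      have := ((hasDerivAt_id (0 : ℝ)).smul_const v).const_add a
      simp only [id, one_smul] at this
      exact this
    have hD0 : HasFDerivAt Φ D (a + (0 : ℝ) • v) := by simpa using hD
    have h1 : HasDerivAt (fun s : ℝ => Φ (a + s • v)) (D v) 0 := by
      have h := hD0.comp_hasDerivAt 0 hline
      exact h
    have hgm : ∀ m, HasDerivAt (fun s : ℝ => gfun t c (Htilde + s • v.1) (ψt + s • v.2.1) m)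
        ((starRingEnd ℂ) (xfun ψt m) * ((Htildeᴴ *ᵥ (Pmat t *ᵥ (v.1 *ᵥ xfun ψt +
          Htilde *ᵥ fun k => Complex.I * (v.2.1 k : ℂ) * xfun ψt k))) m)) 0 :=
      fun m => hasDerivAt_gfun t c Htilde v.1 ψt v.2.1 hnl' m
    have hfeq : (fun s : ℝ => Φ (a + s • v)) = fun s : ℝ =>
        (Htilde + s • v.1,
         ((fun m => (gfun t c (Htilde + s • v.1) (ψt + s • v.2.1) m).im),
          (fun m => (gfun t c (Htilde + s • v.1) (ψt + s • v.2.1) m).re + s * v.2.2 m))) := by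
      funext s
      simp only [hΦdef, hadef, PhiMap, Prod.fst_add, Prod.snd_add, Prod.smul_fst, Prod.smul_snd]
      refine Prod.ext rfl (Prod.ext rfl ?_)
      funext m
      simp
    have h2 : HasDerivAt (fun s : ℝ => Φ (a + s • v))
        (v.1,
         ((fun m => ((starRingEnd ℂ) (xfun ψt m) * ((Htildeᴴ *ᵥ (Pmat t *ᵥ (v.1 *ᵥ xfun ψt +
            Htilde *ᵥ fun k => Complex.I * (v.2.1 k : ℂ) * xfun ψt k))) m)).im),
          (fun m => ((starRingEnd ℂ) (xfun ψt m) * ((Htildeᴴ *ᵥ (Pmat t *ᵥ (v.1 *ᵥ xfun ψt +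
            Htilde *ᵥ fun k => Complex.I * (v.2.1 k : ℂ) * xfun ψt k))) m)).re + v.2.2 m))) 0 := by
      rw [hfeq]
      refine HasDerivAt.prodMk ?_ (HasDerivAt.prodMk ?_ ?_)
      · simpa using ((hasDerivAt_id (0 : ℝ)).smul_const v.1).const_add Htilde
      · rw [hasDerivAt_pi]
        intro m
        simpa [Function.comp_def] using Complex.imCLM.hasFDerivAt.comp_hasDerivAt 0 (hgm m)
      · rw [hasDerivAt_pi]
        intro m
        have hre := Complex.reCLM.hasFDerivAt.comp_hasDerivAt 0 (hgm m)
        have hy : HasDerivAt (fun s : ℝ => s * v.2.2 m) (v.2.2 m) 0 := by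
          simpa using (hasDerivAt_id (0 : ℝ)).mul_const (v.2.2 m)
        simpa [Function.comp_def] using hre.fun_add hy
    exact h1.unique h2
  -- kernel of D is trivial
  have hker : ∀ v, D v = 0 → v = 0 := by
    intro v hv
    rw [hDv v] at hv
    rw [Prod.ext_iff] at hv
    obtain ⟨hv1, hv2⟩ := hv
    rw [Prod.ext_iff] at hv2
    obtain ⟨hv21, hv22⟩ := hv2
    simp only at hv1
    have hψ : v.2.1 = 0 := by
      refine psid_eq_zero t Htilde hpd ψt v.2.1 fun m => ?_
      have := congrFun hv21 m
      simpa [hv1, Matrix.zero_mulVec] using this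
    have hy : v.2.2 = 0 := by
      funext m
      have := congrFun hv22 m
      have hxd0 : (fun k => Complex.I * (v.2.1 k : ℂ) * xfun ψt k) = 0 := by
        funext k
        simp [hψ]
      rw [hv1, hxd0] at this
      simpa [Matrix.zero_mulVec, Matrix.mulVec_zero] using this
    have : v = (v.1, (v.2.1, v.2.2)) := rfl
    rw [this, hv1, hψ, hy]
    rfl
  have hinj : Function.Injective D := by
    intro u w huw
    have h0 : D (u - w) = 0 := by rw [map_sub, huw, sub_self]
    have := hker _ h0
    exact sub_eq_zero.mp this
  have hsurj : Function.Surjective D.toLinearMap :=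
    LinearMap.injective_iff_surjective.mp hinj
  let Dlin := LinearEquiv.ofBijective D.toLinearMap ⟨hinj, hsurj⟩
  let Deq := Dlin.toContinuousLinearEquiv
  have hD' : HasFDerivAt Φ ((Deq : _ →L[ℝ] _)) a := by
    have : (Deq : _ →L[ℝ] _) = D := ContinuousLinearMap.ext fun v => rfl
    rw [this]
    exact hD
  have hCa : ContDiffAt ℝ 1 Φ a := hC.contDiffAt
  set PH := hCa.toOpenPartialHomeomorph Φ hD' one_ne_zero with hPHdef
  have hasource : a ∈ PH.source := hCa.mem_toOpenPartialHomeomorph_source hD' one_ne_zero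
  have hatarget : Φ a ∈ PH.target := hCa.image_mem_toOpenPartialHomeomorph_target hD' one_ne_zero
  have hsymmcd : ContDiffAt ℝ 1 PH.symm (Φ a) := by
    have h := hCa.to_localInverse (f' := Deq) hD' one_ne_zero
    exact h
  obtain ⟨u, hu_nhds, hu_cd⟩ := hsymmcd.contDiffOn le_rfl (by simp)
  obtain ⟨u₀, hu₀sub, hu₀open, hu₀mem⟩ := mem_nhds_iff.mp hu_nhds
  obtain ⟨V₁, hV₁, U, hU, hVU⟩ := mem_nhds_prod_iff.mp (PH.open_source.mem_nhds hasource)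
  obtain ⟨V₁', hV₁'sub, hV₁'open, hV₁'mem⟩ := mem_nhds_iff.mp hV₁
  set ι : Matrix (Fin (K - 1)) (Fin M) ℂ →
      Matrix (Fin (K - 1)) (Fin M) ℂ × ((Fin M → ℝ) × (Fin M → ℝ)) :=
    fun H => (H, ((0 : Fin M → ℝ), (0 : Fin M → ℝ))) with hιdef
  have hιcont : Continuous ι := continuous_id.prodMk continuous_const
  have hιcd : ContDiff ℝ 1 ι := contDiff_id.prodMk contDiff_const
  refine ⟨(ι ⁻¹' (PH.target ∩ u₀)) ∩ V₁', ?_, ?_, ?_⟩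
  · exact ((PH.open_target.inter hu₀open).preimage hιcont).inter hV₁'open
  · constructor
    · have : ι Htilde = Φ a := hΦa.symm
      rw [Set.mem_preimage, this]
      exact ⟨hatarget, hu₀mem⟩
    · exact hV₁'mem
  refine ⟨fun H => (PH.symm (ι H)).2.1, fun H => (PH.symm (ι H)).2.2, ?_, ?_, ?_, ?_, ?_, ?_⟩
  · have hcomp : ContDiffOn ℝ 1 (fun H => PH.symm (ι H)) ((ι ⁻¹' (PH.target ∩ u₀)) ∩ V₁') :=
      hu_cd.comp hιcd.contDiffOn fun H hH => hu₀sub hH.1.2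
    exact (contDiff_fst.comp contDiff_snd).comp_contDiffOn hcomp
  · have hcomp : ContDiffOn ℝ 1 (fun H => PH.symm (ι H)) ((ι ⁻¹' (PH.target ∩ u₀)) ∩ V₁') :=
      hu_cd.comp hιcd.contDiffOn fun H hH => hu₀sub hH.1.2
    exact (contDiff_snd.comp contDiff_snd).comp_contDiffOn hcomp
  · have h1 : ι Htilde = Φ a := hΦa.symm
    have hlv : PH.symm (Φ a) = a := PH.left_inv hasource
    show (PH.symm (ι Htilde)).2.1 = ψt
    rw [h1, hlv]
  · have h1 : ι Htilde = Φ a := hΦa.symm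
    have hlv : PH.symm (Φ a) = a := PH.left_inv hasource
    show (PH.symm (ι Htilde)).2.2 = 0
    rw [h1, hlv]
  · intro H hH
    have htar : ι H ∈ PH.target := hH.1.1
    have hΦsymm : Φ (PH.symm (ι H)) = ι H := PH.right_inv htar
    have h1 : (PH.symm (ι H)).1 = H := congrArg Prod.fst hΦsymm
    show regEq t c H ((PH.symm (ι H)).2.1) ((PH.symm (ι H)).2.2)
    rw [regEq_iff]
    have h2 : (Φ (PH.symm (ι H))).2 = 0 := by rw [hΦsymm]; rfl
    have hpair : (H, ((PH.symm (ι H)).2.1, (PH.symm (ι H)).2.2)) = PH.symm (ι H) := by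
      rw [Prod.ext_iff]
      exact ⟨h1.symm, rfl⟩
    rw [← hΦdef, hpair]
    exact h2
  · refine ⟨U, hU, ?_⟩
    intro H hH ψ y hmemU hreg
    have htar : ι H ∈ PH.target := hH.1.1
    have hz : Φ (H, (ψ, y)) = ι H := by
      have h2 := (regEq_iff t c H ψ y).mp hreg
      rw [← hΦdef] at h2
      refine Prod.ext rfl ?_
      rw [h2]
      rfl
    have hsrc : (H, (ψ, y)) ∈ PH.source := hVU ⟨hV₁'sub hH.2, hmemU⟩
    have hli : PH.symm (Φ (H, (ψ, y))) = (H, (ψ, y)) := PH.left_inv hsrc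
    rw [hz] at hli
    constructor
    · exact (congrArg (fun p => p.2.1) hli).symm
    · exact (congrArg (fun p => p.2.2) hli).symm
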